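/- For every n ∈ ℕ, the polynomials x^n/2 − 1 and x^n/2 + 1 are both irreducible elements of the ring R₀ = x·ℚ[x] + ℤ; hence R₀ contains a cofinal (in the polynomial-degree order f < g iff g − f has positive leading coefficient) set of pairs of irreducible elements differing by 2. -/

import Mathlib

open Polynomial

noncomputable def R0 : Subring (Polynomial ℚ) :=
  Subring.comap (Polynomial.evalRingHom (0 : ℚ)) ⊥

lemma int_irr (n : ℕ) (hn : 1 ≤ n) (e : ℤ) (he : e = 1 ∨ e = -1) :
    Irreducible ((X : ℤ[X]) ^ n + C (2 * e)) := by
  have hCdeg : degree (C (2 * e) : ℤ[X]) < degree ((X : ℤ[X]) ^ n) := by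
    rw [degree_X_pow]
    exact lt_of_le_of_lt degree_C_le (by exact_mod_cast hn)
  have hmon : ((X : ℤ[X]) ^ n + C (2 * e)).Monic := (monic_X_pow n).add_of_left hCdeg
  have hdeg : ((X : ℤ[X]) ^ n + C (2 * e)).degree = n := by
    rw [degree_add_eq_left_of_degree_lt hCdeg, degree_X_pow]
  refine irreducible_of_eisenstein_criterion
    (Ideal.span_singleton_prime (by norm_num : (2:ℤ) ≠ 0) |>.mpr Int.prime_two)
    ?_ ?_ ?_ ?_ hmon.isPrimitive
  · rw [hmon.leadingCoeff]
    simp [Ideal.mem_span_singleton]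
  · intro m hm
    rw [hdeg] at hm
    have hmn : m < n := by exact_mod_cast hm
    have : ((X : ℤ[X]) ^ n + C (2 * e)).coeff m = if m = 0 then 2 * e else 0 := by
      rw [coeff_add, coeff_X_pow, if_neg hmn.ne, zero_add, coeff_C]
    rw [this]
    split
    · exact Ideal.mem_span_singleton.mpr ⟨e, rfl⟩
    · exact zero_mem _
  · rw [hdeg]
    exact_mod_cast hn
  · have h0 : ((X : ℤ[X]) ^ n + C (2 * e)).coeff 0 = 2 * e := by
      have h0n : ¬ (0 = n) := by omega
      rw [coeff_add, coeff_X_pow, if_neg h0n, zero_add, coeff_C, if_pos rfl]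
    rw [h0, Ideal.span_singleton_pow, Ideal.mem_span_singleton]
    rcases he with rfl | rfl <;> decide

lemma rat_irr (n : ℕ) (hn : 1 ≤ n) (e : ℤ) (he : e = 1 ∨ e = -1) :
    Irreducible (C (1/2 : ℚ) * X ^ n + C (e : ℚ)) := by
  have h1 : Irreducible ((X : ℚ[X]) ^ n + C ((2 * e : ℤ) : ℚ)) := by
    have hCdeg : degree (C (2 * e) : ℤ[X]) < degree ((X : ℤ[X]) ^ n) := by
      rw [degree_X_pow]
      exact lt_of_le_of_lt degree_C_le (by exact_mod_cast hn)
    have hmon : ((X : ℤ[X]) ^ n + C (2 * e)).Monic := (monic_X_pow n).add_of_left hCdeg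
    have := (Polynomial.IsPrimitive.Int.irreducible_iff_irreducible_map_cast
      hmon.isPrimitive).mp (int_irr n hn e he)
    simpa [Polynomial.map_add, Polynomial.map_pow, C_ofNat] using this
  have key : C (1/2 : ℚ) * X ^ n + C (e : ℚ)
      = C (1/2 : ℚ) * ((X : ℚ[X]) ^ n + C ((2 * e : ℤ) : ℚ)) := by
    have hC : C (1/2 : ℚ) * C ((2 * e : ℤ) : ℚ) = C (e : ℚ) := by
      rw [← C_mul]; congr 1; push_cast; ring
    rw [mul_add, hC]
  rw [key]
  exact (irreducible_isUnit_mul (isUnit_C.mpr (by norm_num))).mpr h1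

lemma mem_R0_iff {p : ℚ[X]} : p ∈ R0 ↔ ∃ k : ℤ, (k : ℚ) = p.eval 0 := by
  simp [R0, Subring.mem_comap, Subring.mem_bot]

lemma unit_lift (p a b : R0) (h2 : (p : ℚ[X]).eval 0 = 1 ∨ (p : ℚ[X]).eval 0 = -1)
    (hab : (p : ℚ[X]) = (a : ℚ[X]) * (b : ℚ[X])) (hu : IsUnit (a : ℚ[X])) : IsUnit a := by
  obtain ⟨r, hr, hra⟩ := Polynomial.isUnit_iff.mp hu
  obtain ⟨m, hm⟩ := mem_R0_iff.mp a.2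
  obtain ⟨k, hk⟩ := mem_R0_iff.mp b.2
  have heval : (a : ℚ[X]).eval 0 * (b : ℚ[X]).eval 0 = (p : ℚ[X]).eval 0 := by
    rw [hab, eval_mul]
  have hmk : (m : ℚ) * k = (p : ℚ[X]).eval 0 := by rw [hm, hk, heval]
  have hmunit : IsUnit m := by
    rcases h2 with h | h
    · refine IsUnit.of_mul_eq_one (a := m) k ?_
      have : ((m * k : ℤ) : ℚ) = ((1 : ℤ) : ℚ) := by push_cast; rw [hmk, h]
      exact_mod_cast this
    · refine IsUnit.of_mul_eq_one (a := m) (-k) ?_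
      have : ((m * (-k) : ℤ) : ℚ) = ((1 : ℤ) : ℚ) := by
        push_cast; rw [mul_neg, hmk, h]; norm_num
      exact_mod_cast this
  have hr' : r = (m : ℚ) := by
    have : (a : ℚ[X]).eval 0 = r := by rw [← hra, eval_C]
    rw [← this, hm]
  rcases Int.isUnit_iff.mp hmunit with rfl | rfl
  · have : a = 1 := Subtype.ext (by rw [← hra, hr']; norm_num)
    rw [this]; exact isUnit_one
  · have : a = -1 := Subtype.ext (by rw [← hra, hr']; push_cast; simp)
    rw [this]
    exact IsUnit.neg isUnit_one

lemma irr_R0 (p : R0) (h1 : Irreducible (p : ℚ[X]))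
    (h2 : (p : ℚ[X]).eval 0 = 1 ∨ (p : ℚ[X]).eval 0 = -1) : Irreducible p := by
  constructor
  · intro hu
    exact h1.not_isUnit (hu.map R0.subtype)
  · rintro a b hab
    have habQ : (p : ℚ[X]) = (a : ℚ[X]) * (b : ℚ[X]) := by
      rw [hab]; rfl
    rcases h1.isUnit_or_isUnit habQ with hu | hu
    · exact Or.inl (unit_lift p a b h2 habQ hu)
    · exact Or.inr (unit_lift p b a h2 (by rw [habQ]; ring) hu)

theorem cofinal_twin_irreducibles :
    (∀ n : ℕ, 1 ≤ n →
      ∃ (hm : C (1/2 : ℚ) * X ^ n - 1 ∈ R0) (hp : C (1/2 : ℚ) * X ^ n + 1 ∈ R0),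
        Irreducible (⟨C (1/2 : ℚ) * X ^ n - 1, hm⟩ : R0) ∧
        Irreducible (⟨C (1/2 : ℚ) * X ^ n + 1, hp⟩ : R0)) ∧
    ∀ f : R0, ∃ g h : R0, Irreducible g ∧ Irreducible h ∧
      (h : Polynomial ℚ) = (g : Polynomial ℚ) + 2 ∧
      0 < ((g : Polynomial ℚ) - (f : Polynomial ℚ)).leadingCoeff := by
  have key : ∀ n : ℕ, 1 ≤ n →
      ∃ (hm : C (1/2 : ℚ) * X ^ n - 1 ∈ R0) (hp : C (1/2 : ℚ) * X ^ n + 1 ∈ R0),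
        Irreducible (⟨C (1/2 : ℚ) * X ^ n - 1, hm⟩ : R0) ∧
        Irreducible (⟨C (1/2 : ℚ) * X ^ n + 1, hp⟩ : R0) := by
    intro n hn
    have hn0 : n ≠ 0 := by omega
    have evm : (C (1/2 : ℚ) * X ^ n - 1).eval 0 = -1 := by simp [zero_pow hn0]
    have evp : (C (1/2 : ℚ) * X ^ n + 1).eval 0 = 1 := by simp [zero_pow hn0]
    have hm : C (1/2 : ℚ) * X ^ n - 1 ∈ R0 := mem_R0_iff.mpr ⟨-1, by rw [evm]; norm_num⟩
    have hp : C (1/2 : ℚ) * X ^ n + 1 ∈ R0 := mem_R0_iff.mpr ⟨1, by rw [evp]; norm_num⟩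
    refine ⟨hm, hp, ?_, ?_⟩
    · refine irr_R0 _ ?_ (Or.inr evm)
      show Irreducible (C (1/2 : ℚ) * X ^ n - 1)
      have h1 : C (1/2 : ℚ) * X ^ n - 1 = C (1/2 : ℚ) * X ^ n + C (((-1 : ℤ)) : ℚ) := by
        rw [show (((-1 : ℤ)) : ℚ) = -1 by norm_num, map_neg, map_one]; ring
      rw [h1]
      exact rat_irr n hn (-1) (Or.inr rfl)
    · refine irr_R0 _ ?_ (Or.inl evp)
      show Irreducible (C (1/2 : ℚ) * X ^ n + 1)
      have h1 : C (1/2 : ℚ) * X ^ n + 1 = C (1/2 : ℚ) * X ^ n + C (((1 : ℤ)) : ℚ) := by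
        rw [show (((1 : ℤ)) : ℚ) = 1 by norm_num, map_one]
      rw [h1]
      exact rat_irr n hn 1 (Or.inl rfl)
  refine ⟨key, ?_⟩
  intro f
  set n := (f : ℚ[X]).natDegree + 1 with hn
  obtain ⟨hm, hp, hgi, hhi⟩ := key n (by omega)
  refine ⟨⟨_, hm⟩, ⟨_, hp⟩, hgi, hhi, by show C (1/2:ℚ) * X ^ n + 1 = _; push_cast; ring, ?_⟩
  show (0:ℚ) < (C (1/2 : ℚ) * X ^ n - 1 - (f : ℚ[X])).leadingCoeff
  have hlt : degree (-1 - (f : ℚ[X])) < degree (C (1/2 : ℚ) * X ^ n) := by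
    rw [degree_C_mul_X_pow n (by norm_num : (1/2 : ℚ) ≠ 0)]
    refine lt_of_le_of_lt (degree_sub_le _ _) (max_lt ?_ ?_)
    · rw [degree_neg, degree_one]
      exact_mod_cast Nat.succ_pos _
    · exact lt_of_le_of_lt degree_le_natDegree (by exact_mod_cast Nat.lt_succ_self _)
  have hq : C (1/2 : ℚ) * X ^ n - 1 - (f : ℚ[X]) = (-1 - (f : ℚ[X])) + C (1/2 : ℚ) * X ^ n := by
    ring
  rw [hq, leadingCoeff_add_of_degree_lt hlt, leadingCoeff_C_mul_X_pow]
  norm_num
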